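/- arXiv:2510.07158 — 2 statements merged into one kernel-verified Lean document; each statement's English description precedes it below -/
import Mathlib

section
/- Let {E_1, …, E_m} be a unitary error set on ℂ^N, let K ≤ N be a positive integer with Km ≤ N, and let V : ℂ^K → ℂ^N be an isometry (V†V = I_K) which is a δ-approximate nondegenerate code with respect to {E_1, …, E_m} for some 0 ≤ δ < 1. Define D̂ = Σ_{i=1}^m (V† E_i†) ⊗ |i⟩, a (Km)×N matrix, and let D = (D̂ D̂†)^{−1/2}·D̂ (rounding all singular values of D̂ to 1). Let R be a finite set, let c_{r,i} ∈ ℂ with K_r = Σ_{i=1}^m c_{r,i} E_i satisfying Σ_{r ∈ R} K_r† K_r = I_N, and let c = Σ_{r ∈ R} Σ_{i=1}^m c_{r,i} |i⟩⊗|r⟩ ∈ ℂ^m ⊗ ℂ^R. Then for every positive integer B and every unit vector φ ∈ ℂ^K ⊗ ℂ^B, the vector Σ_{r ∈ R} ((D ⊗ I_B)·((K_r V ⊗ I_B)·φ)) ⊗ |r⟩ (a vector in ℂ^K ⊗ ℂ^m ⊗ ℂ^B ⊗ ℂ^R) is within Euclidean distance δ of the vector obtained from φ ⊗ c by the canonical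 reordering of tensor factors (ℂ^K ⊗ ℂ^B) ⊗ (ℂ^m ⊗ ℂ^R) → ℂ^K ⊗ ℂ^m ⊗ ℂ^B ⊗ ℂ^R. -/
open scoped Kronecker ComplexOrder
open Matrix MeasureTheory ProbabilityTheory

noncomputable section

/-- The positive semidefinite square root of a positive semidefinite matrix (the Mathlib
definition of December 2024, since removed from Mathlib). -/
def Matrix.PosSemidef.sqrt {n 𝕜 : Type*} [Fintype n] [RCLike 𝕜] [DecidableEq n]
    {A : Matrix n n 𝕜} (hA : A.PosSemidef) : Matrix n n 𝕜 :=
  hA.1.eigenvectorUnitary.1 * diagonal ((↑) ∘ (√·) ∘ hA.1.eigenvalues) *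
    (star hA.1.eigenvectorUnitary : Matrix n n 𝕜)

/-- The Euclidean (ℓ²) norm of a finitely indexed complex vector. -/
def enorm2 {ι : Type*} [Fintype ι] (x : ι → ℂ) : ℝ :=
  Real.sqrt (∑ i, ‖x i‖ ^ 2)

/-- `T` is a `δ`-approximate isometry: every singular value lies in `[1-δ, 1+δ]`,
equivalently `(1-δ)‖c‖ ≤ ‖Tc‖ ≤ (1+δ)‖c‖` for every vector `c`. -/
def IsApproxIsometry {ι κ : Type*} [Fintype ι] [Fintype κ] (δ : ℝ) (T : Matrix ι κ ℂ) : Prop :=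
  ∀ c : κ → ℂ,
    (1 - δ) * enorm2 c ≤ enorm2 (T.mulVec c) ∧ enorm2 (T.mulVec c) ≤ (1 + δ) * enorm2 c

/-- A unitary error set: each `E i` is unitary and `tr((E i)ᴴ E j) = 0` for `i ≠ j`. -/
def IsUnitaryErrorSet {ι : Type*} {N : ℕ} (E : ι → Matrix (Fin N) (Fin N) ℂ) : Prop :=
  (∀ i, (E i)ᴴ * E i = 1 ∧ E i * (E i)ᴴ = 1) ∧
    ∀ i j : ι, i ≠ j → ((E i)ᴴ * E j).trace = 0

/-- The `N × (Km)` matrix `Y = Σ_i E_i V ⊗ ⟨i|`, whose column indexed by `(j, i)`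
is the vector `E_i · V · e_j`. -/
def shiftMat {N K m : ℕ} (E : Fin m → Matrix (Fin N) (Fin N) ℂ) (V : Matrix (Fin N) (Fin K) ℂ) :
    Matrix (Fin N) (Fin K × Fin m) ℂ :=
  Matrix.of fun a ji => (E ji.2 * V) a ji.1

/-- The operator norm (largest singular value) of a complex matrix. -/
def opNorm {ι κ : Type*} [Fintype ι] [Fintype κ] (A : Matrix ι κ ℂ) : ℝ :=
  sSup {r | ∃ c : κ → ℂ, enorm2 c = 1 ∧ r = enorm2 (A.mulVec c)}

/-- The smallest singular value of a (tall) complex matrix. -/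
def sMin {ι κ : Type*} [Fintype ι] [Fintype κ] (A : Matrix ι κ ℂ) : ℝ :=
  sInf {r | ∃ c : κ → ℂ, enorm2 c = 1 ∧ r = enorm2 (A.mulVec c)}

/-- `isometrize G = G (GᴴG)^{-1/2}`: round all singular values of `G` to `1`. -/
def isometrize {N K : ℕ} (G : Matrix (Fin N) (Fin K) ℂ) : Matrix (Fin N) (Fin K) ℂ :=
  G * ((Matrix.posSemidef_conjTranspose_mul_self G).sqrt)⁻¹

/-- Round the singular values of a wide matrix `D̂` to one: `(D̂ D̂ᴴ)^{-1/2} D̂`. -/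
def coisometrize {ι : Type*} [Fintype ι] [DecidableEq ι] {N : ℕ}
    (Dhat : Matrix ι (Fin N) ℂ) : Matrix ι (Fin N) ℂ :=
  ((Matrix.posSemidef_self_mul_conjTranspose Dhat).sqrt)⁻¹ * Dhat

end

noncomputable section Stmt7Aux

namespace Stmt7Aux

lemma enorm2_zero {ι : Type*} [Fintype ι] : enorm2 (0 : ι → ℂ) = 0 := by
  simp [enorm2]

lemma enorm2_nonneg {ι : Type*} [Fintype ι] (x : ι → ℂ) : 0 ≤ enorm2 x :=
  Real.sqrt_nonneg _

lemma enorm2_eq_zero {ι : Type*} [Fintype ι] {x : ι → ℂ} (h : enorm2 x = 0) : x = 0 := by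
  have hs : ∑ i, ‖x i‖ ^ 2 = 0 := Real.sqrt_eq_zero (by positivity) |>.1 h
  funext i
  have h1 := (Finset.sum_eq_zero_iff_of_nonneg (fun i _ => by positivity)).1 hs i
    (Finset.mem_univ i)
  have : ‖x i‖ = 0 := by nlinarith [norm_nonneg (x i)]
  simpa using this

lemma enorm2_real_smul {ι : Type*} [Fintype ι] (r : ℝ) (x : ι → ℂ) :
    enorm2 (r • x) = |r| * enorm2 x := by
  unfold enorm2
  have : ∀ i, ‖(r • x) i‖ ^ 2 = r ^ 2 * ‖x i‖ ^ 2 := by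
    intro i
    simp [Pi.smul_apply, norm_smul, mul_pow, Real.norm_eq_abs, sq_abs]
  simp_rw [this, ← Finset.mul_sum]
  rw [Real.sqrt_mul (sq_nonneg r), Real.sqrt_sq_eq_abs]

lemma sum_sq_eq_re_dot {n : Type*} [Fintype n] (x : n → ℂ) :
    ∑ i, ‖x i‖ ^ 2 = (dotProduct (star x) x).re := by
  simp [dotProduct, Complex.re_sum, RCLike.conj_mul, ← Complex.ofReal_pow]

lemma dot_transfer {m n : Type*} [Fintype m] [Fintype n] (A : Matrix m n ℂ) (c : n → ℂ) :
    dotProduct (star (A *ᵥ c)) (A *ᵥ c) = dotProduct (star c) ((Aᴴ * A) *ᵥ c) := by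
  rw [star_mulVec, dotProduct_mulVec, dotProduct_mulVec, vecMul_vecMul]

lemma enorm2_transfer {m m' n : Type*} [Fintype m] [Fintype m'] [Fintype n]
    (A : Matrix m n ℂ) (Bm : Matrix m' n ℂ) (hAB : Aᴴ * A = Bmᴴ * Bm) (c : n → ℂ) :
    enorm2 (A *ᵥ c) = enorm2 (Bm *ᵥ c) := by
  unfold enorm2
  rw [sum_sq_eq_re_dot, sum_sq_eq_re_dot, dot_transfer, dot_transfer, hAB]

lemma parseval {ι n : Type*} [Fintype ι] [Fintype n]
    (b : OrthonormalBasis ι ℂ (EuclideanSpace ℂ n)) (w : EuclideanSpace ℂ n) :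
    ∑ q, ‖w q‖ ^ 2 = ∑ i, ‖b.repr w i‖ ^ 2 := by
  have h1 : ∑ q, ‖w q‖ ^ 2 = ‖w‖ ^ 2 := by
    rw [EuclideanSpace.norm_eq, Real.sq_sqrt (by positivity)]
  have h2 : ∑ i, ‖b.repr w i‖ ^ 2 = ‖b.repr w‖ ^ 2 := by
    rw [EuclideanSpace.norm_eq, Real.sq_sqrt (by positivity)]
  rw [h1, h2, LinearIsometryEquiv.norm_map]

lemma spec_bound {n : Type*} [Fintype n] [DecidableEq n] {S : Matrix n n ℂ}
    (hS : S.IsHermitian) {δ : ℝ}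
    (hev : ∀ i, |hS.eigenvalues i - 1| ≤ δ) (v : n → ℂ) :
    ∑ q, ‖((S - 1) *ᵥ v) q‖ ^ 2 ≤ δ ^ 2 * ∑ q, ‖v q‖ ^ 2 := by
  let b := hS.eigenvectorBasis
  let μ := hS.eigenvalues
  have key : ∀ i, b.repr ((WithLp.equiv 2 (n → ℂ)).symm ((S - 1) *ᵥ v)) i
      = ((μ i : ℂ) - 1) * b.repr ((WithLp.equiv 2 (n → ℂ)).symm v) i := by
    intro i
    rw [b.repr_apply_apply, b.repr_apply_apply]
    have hinner : ∀ (x : EuclideanSpace ℂ n) (y : n → ℂ),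
        (inner ℂ x ((WithLp.equiv 2 (n → ℂ)).symm y) : ℂ) = dotProduct (star ⇑x) y := by
      intro x y
      simp [PiLp.inner_apply, dotProduct, RCLike.inner_apply, mul_comm]
    rw [hinner, hinner]
    rw [dotProduct_mulVec]
    have h1 : star ⇑(b i) ᵥ* (S - 1) = star ((S - 1) *ᵥ ⇑(b i)) := by
      rw [star_mulVec, (hS.sub isHermitian_one).eq]
    have h2 : (S - 1) *ᵥ ⇑(b i) = ((μ i : ℂ) - 1) • ⇑(b i) := by
      rw [sub_mulVec, one_mulVec, hS.mulVec_eigenvectorBasis, sub_smul, one_smul,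
        RCLike.real_smul_eq_coe_smul (K := ℂ)]
      rfl
    rw [h1, h2, star_smul, smul_dotProduct]
    have : star ((μ i : ℂ) - 1) = ((μ i : ℂ) - 1) := by
      simp [Complex.ext_iff]
    rw [this]
    rfl
  have e1 : ∑ q, ‖((S - 1) *ᵥ v) q‖ ^ 2
      = ∑ i, ‖b.repr ((WithLp.equiv 2 (n → ℂ)).symm ((S - 1) *ᵥ v)) i‖ ^ 2 :=
    parseval b ((WithLp.equiv 2 (n → ℂ)).symm ((S - 1) *ᵥ v))
  have e2 : ∑ q, ‖v q‖ ^ 2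
      = ∑ i, ‖b.repr ((WithLp.equiv 2 (n → ℂ)).symm v) i‖ ^ 2 :=
    parseval b ((WithLp.equiv 2 (n → ℂ)).symm v)
  rw [e1, e2, Finset.mul_sum]
  apply Finset.sum_le_sum
  intro i _
  rw [key i, norm_mul, mul_pow]
  apply mul_le_mul_of_nonneg_right _ (by positivity)
  have habs : ‖((μ i : ℂ) - 1)‖ = |μ i - 1| := by
    rw [show ((μ i : ℂ) - 1) = ((μ i - 1 : ℝ) : ℂ) by push_cast; ring]
    exact (Complex.norm_real _).trans (Real.norm_eq_abs _)
  rw [habs]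
  have h0 : (0 : ℝ) ≤ |μ i - 1| := abs_nonneg _
  nlinarith [hev i]

lemma eig_bound {n : Type*} [Fintype n] [DecidableEq n] {S : Matrix n n ℂ}
    (hS : S.PosSemidef) {δ : ℝ}
    (hiso : ∀ c : n → ℂ, (1 - δ) * enorm2 c ≤ enorm2 (S *ᵥ c) ∧
        enorm2 (S *ᵥ c) ≤ (1 + δ) * enorm2 c) (i : n) :
    |hS.1.eigenvalues i - 1| ≤ δ := by
  have hnb : enorm2 ⇑(hS.1.eigenvectorBasis i) = 1 := by
    have h1 : enorm2 ⇑(hS.1.eigenvectorBasis i) = ‖hS.1.eigenvectorBasis i‖ :=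
      (EuclideanSpace.norm_eq _).symm
    rw [h1, hS.1.eigenvectorBasis.orthonormal.1 i]
  have hmv : enorm2 (S *ᵥ ⇑(hS.1.eigenvectorBasis i)) = hS.1.eigenvalues i := by
    rw [hS.1.mulVec_eigenvectorBasis, enorm2_real_smul, hnb, mul_one,
      abs_of_nonneg (hS.eigenvalues_nonneg i)]
  obtain ⟨hlo, hhi⟩ := hiso ⇑(hS.1.eigenvectorBasis i)
  rw [hmv, hnb] at hlo hhi
  rw [abs_le]
  exact ⟨by linarith, by linarith⟩

lemma det_ne_zero' {n : Type*} [Fintype n] [DecidableEq n] {S : Matrix n n ℂ} {δ : ℝ}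
    (hδ1 : δ < 1)
    (hiso : ∀ c : n → ℂ, (1 - δ) * enorm2 c ≤ enorm2 (S *ᵥ c) ∧
        enorm2 (S *ᵥ c) ≤ (1 + δ) * enorm2 c) :
    S.det ≠ 0 := by
  intro hdet
  obtain ⟨v, hv0, hv⟩ := (Matrix.exists_mulVec_eq_zero_iff).2 hdet
  have hle := (hiso v).1
  rw [hv, enorm2_zero] at hle
  have hpos : 0 < enorm2 v := by
    rcases lt_or_eq_of_le (enorm2_nonneg v) with h | h
    · exact h
    · exact absurd (enorm2_eq_zero h.symm) hv0
  nlinarith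

lemma kron_one_mulVec {q q' b : Type*} [Fintype q'] [Fintype b] [DecidableEq b]
    (A : Matrix q q' ℂ) (v : q' × b → ℂ) (p : q × b) :
    ((A ⊗ₖ (1 : Matrix b b ℂ)) *ᵥ v) p = (A *ᵥ fun i' => v (i', p.2)) p.1 := by
  simp [Matrix.mulVec, dotProduct, Fintype.sum_prod_type, Matrix.one_apply,
    mul_ite, ite_mul, mul_zero, zero_mul, mul_one]

lemma norm_c {N m : ℕ} (hN : 0 < N) {E : Fin m → Matrix (Fin N) (Fin N) ℂ}
    (hE : IsUnitaryErrorSet E) {R : Type*} [Fintype R] (c : R → Fin m → ℂ)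
    (hkraus : ∑ r : R, (∑ i, c r i • E i)ᴴ * (∑ i, c r i • E i) = 1) :
    ∑ r : R, ∑ i, ‖c r i‖ ^ 2 = 1 := by
  have h1 : ∀ r, ((∑ i, c r i • E i)ᴴ * (∑ i, c r i • E i)).trace
      = ∑ i, (starRingEnd ℂ (c r i) * c r i) * (N : ℂ) := by
    intro r
    rw [conjTranspose_sum]
    simp_rw [conjTranspose_smul, Finset.sum_mul_sum, smul_mul_smul_comm, trace_sum, trace_smul]
    rw [Finset.sum_comm]
    refine Finset.sum_congr rfl fun i _ => ?_
    rw [Finset.sum_eq_single i]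
    · rw [(hE.1 i).1, trace_one, smul_eq_mul]
      simp
    · intro j _ hj
      rw [hE.2 j i hj, smul_zero]
    · intro h; exact absurd (Finset.mem_univ i) h
  have h2 : ∑ r : R, ∑ i, (starRingEnd ℂ (c r i) * c r i) * (N : ℂ) = (N : ℂ) := by
    have := congrArg Matrix.trace hkraus
    rw [trace_sum, trace_one] at this
    simp_rw [h1] at this
    simpa using this
  have h3 : ∑ r : R, ∑ i, (starRingEnd ℂ (c r i) * c r i) = 1 := by
    have hNne : (N : ℂ) ≠ 0 := Nat.cast_ne_zero.2 hN.ne'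
    simp_rw [← Finset.sum_mul] at h2
    have h2' : (∑ r : R, ∑ i, (starRingEnd ℂ (c r i) * c r i)) * (N : ℂ) = 1 * (N : ℂ) := by
      rw [one_mul]; exact h2
    exact mul_right_cancel₀ hNne h2'
  have h4 := congrArg Complex.re h3
  simp only [Complex.re_sum] at h4
  have h5 : ∀ (z : ℂ), ((starRingEnd ℂ) z * z).re = ‖z‖ ^ 2 := by
    intro z
    rw [RCLike.conj_mul]
    simp [← Complex.ofReal_pow]
  simp_rw [h5] at h4
  simpa using h4

lemma psd_sqrt_mul_self {n : Type*} [Fintype n] [DecidableEq n] {A : Matrix n n ℂ}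
    (hA : A.PosSemidef) : hA.sqrt * hA.sqrt = A := by
  have hU : (star hA.1.eigenvectorUnitary : Matrix n n ℂ) * hA.1.eigenvectorUnitary.1 = 1 :=
    Unitary.coe_star_mul_self _
  unfold Matrix.PosSemidef.sqrt
  conv_rhs => rw [hA.1.spectral_theorem, Unitary.conjStarAlgAut_apply]
  rw [show ∀ U D sU : Matrix n n ℂ, U * D * sU * (U * D * sU) = U * D * (sU * U) * D * sU by
    intro U D sU; simp only [Matrix.mul_assoc], hU, Matrix.mul_one,
    Matrix.mul_assoc _ (diagonal _) (diagonal _), diagonal_mul_diagonal]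
  congr 2
  ext i j
  simp only [diagonal_apply, Function.comp_apply]
  split_ifs with h
  · rw [← RCLike.ofReal_mul, Real.mul_self_sqrt (hA.eigenvalues_nonneg i)]
  · rfl

lemma psd_sqrt_posSemidef {n : Type*} [Fintype n] [DecidableEq n] {A : Matrix n n ℂ}
    (hA : A.PosSemidef) : hA.sqrt.PosSemidef := by
  unfold Matrix.PosSemidef.sqrt
  rw [Matrix.star_eq_conjTranspose]
  exact (posSemidef_diagonal_iff.2 fun i => RCLike.ofReal_nonneg.2 (Real.sqrt_nonneg _)
    ).mul_mul_conjTranspose_same _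

end Stmt7Aux

end Stmt7Aux

/-- for a `δ`-approximate nondegenerate code, the decoded state
`Σ_r (D ⊗ I_B)(K_r V ⊗ I_B)|φ⟩ ⊗ |r⟩` is within Euclidean distance `δ` of (the reordering of)
`|φ⟩ ⊗ |c⟩`. -/
theorem stmt_7 {N K m : ℕ} (hN : 0 < N) (hK : 0 < K) (hm : 0 < m) (hKm : K * m ≤ N)
    (E : Fin m → Matrix (Fin N) (Fin N) ℂ) (hE : IsUnitaryErrorSet E)
    (V : Matrix (Fin N) (Fin K) ℂ) (hV : Vᴴ * V = 1)
    (δ : ℝ) (hδ0 : 0 ≤ δ) (hδ1 : δ < 1)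
    (hcode : IsApproxIsometry δ (shiftMat E V))
    {R : Type*} [Fintype R] [DecidableEq R] (c : R → Fin m → ℂ)
    (hkraus : ∑ r : R, (∑ i, c r i • E i)ᴴ * (∑ i, c r i • E i) = 1)
    (B : ℕ) (hB : 0 < B)
    (φ : Fin K × Fin B → ℂ) (hφ : enorm2 φ = 1) :
    enorm2 (fun p : ((Fin K × Fin m) × Fin B) × R =>
      ((coisometrize ((shiftMat E V)ᴴ) ⊗ₖ (1 : Matrix (Fin B) (Fin B) ℂ)).mulVec
          ((((∑ i, c p.2 i • E i) * V) ⊗ₖ (1 : Matrix (Fin B) (Fin B) ℂ)).mulVec φ)) p.1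
        - φ (p.1.1.1, p.1.2) * c p.2 p.1.1.2) ≤ δ := by
  classical
  open Stmt7Aux in
  set Y := shiftMat E V with hY
  obtain ⟨S, hS, hSS, hco⟩ : ∃ S : Matrix (Fin K × Fin m) (Fin K × Fin m) ℂ,
      S.PosSemidef ∧ S * S = Yᴴ * Y ∧ coisometrize Yᴴ = S⁻¹ * Yᴴ :=
    ⟨(Matrix.posSemidef_self_mul_conjTranspose Yᴴ).sqrt,
     Stmt7Aux.psd_sqrt_posSemidef (Matrix.posSemidef_self_mul_conjTranspose Yᴴ),
     by rw [Stmt7Aux.psd_sqrt_mul_self (Matrix.posSemidef_self_mul_conjTranspose Yᴴ),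
          conjTranspose_conjTranspose],
     rfl⟩
  have hisoS : ∀ x : (Fin K × Fin m) → ℂ,
      (1 - δ) * enorm2 x ≤ enorm2 (S *ᵥ x) ∧ enorm2 (S *ᵥ x) ≤ (1 + δ) * enorm2 x := by
    intro x
    have htr : enorm2 (S *ᵥ x) = enorm2 (Y *ᵥ x) :=
      Stmt7Aux.enorm2_transfer S Y (by rw [hS.1.eq, hSS]) x
    rw [htr]
    exact hcode x
  have hdet : S.det ≠ 0 := Stmt7Aux.det_ne_zero' hδ1 hisoS
  have hSinv : S⁻¹ * S = 1 := Matrix.nonsing_inv_mul S (Ne.isUnit hdet)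
  have heig : ∀ i, |hS.1.eigenvalues i - 1| ≤ δ := Stmt7Aux.eig_bound hS hisoS
  -- the coefficient matrices
  set M : R → Matrix (Fin K × Fin m) (Fin K) ℂ :=
    fun r => Matrix.of fun ji j' => if ji.1 = j' then c r ji.2 else 0 with hM
  have hYM : ∀ r, Y * M r = (∑ i, c r i • E i) * V := by
    intro r
    ext a j'
    rw [Matrix.mul_apply, Fintype.sum_prod_type]
    simp only [hY, shiftMat, hM, Matrix.of_apply, mul_ite, mul_zero]
    rw [Finset.sum_comm]
    simp only [Finset.sum_ite_eq', Finset.mem_univ, if_true]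
    simp only [Matrix.mul_apply, Matrix.sum_apply, Matrix.smul_apply, smul_eq_mul,
      Finset.sum_mul]
    rw [Finset.sum_comm]
    refine Finset.sum_congr rfl fun i _ => Finset.sum_congr rfl fun k _ => by ring
  have hDK : ∀ r, coisometrize Yᴴ * ((∑ i, c r i • E i) * V) = S * M r := by
    intro r
    rw [← hYM r, hco]
    rw [Matrix.mul_assoc, ← Matrix.mul_assoc Yᴴ Y (M r), ← hSS,
      Matrix.mul_assoc S S (M r), ← Matrix.mul_assoc S⁻¹ S (S * M r), hSinv, Matrix.one_mul]
  -- the target coefficient vectors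
  set x : R → ((Fin K × Fin m) × Fin B) → ℂ :=
    fun r q => φ (q.1.1, q.2) * c r q.1.2 with hx
  have hMvec : ∀ r, ((M r ⊗ₖ (1 : Matrix (Fin B) (Fin B) ℂ)) *ᵥ φ) = x r := by
    intro r
    funext q
    rw [Stmt7Aux.kron_one_mulVec]
    simp only [Matrix.mulVec, dotProduct, hM, Matrix.of_apply, ite_mul, zero_mul,
      Finset.sum_ite_eq, Finset.mem_univ, if_true, hx]
    ring
  -- pointwise identification of the error vector
  have hvec : ∀ p : ((Fin K × Fin m) × Fin B) × R,
      ((coisometrize Yᴴ ⊗ₖ (1 : Matrix (Fin B) (Fin B) ℂ)).mulVec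
          ((((∑ i, c p.2 i • E i) * V) ⊗ₖ (1 : Matrix (Fin B) (Fin B) ℂ)).mulVec φ)) p.1
        - φ (p.1.1.1, p.1.2) * c p.2 p.1.1.2
      = ((S - 1) *ᵥ fun q => x p.2 (q, p.1.2)) p.1.1 := by
    intro p
    rw [Matrix.mulVec_mulVec, ← Matrix.mul_kronecker_mul, Matrix.one_mul, hDK p.2]
    have hsplit : (S * M p.2) ⊗ₖ (1 : Matrix (Fin B) (Fin B) ℂ)
        = (S ⊗ₖ (1 : Matrix (Fin B) (Fin B) ℂ)) * (M p.2 ⊗ₖ (1 : Matrix (Fin B) (Fin B) ℂ)) := by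
      rw [← Matrix.mul_kronecker_mul, Matrix.one_mul]
    rw [hsplit, ← Matrix.mulVec_mulVec, hMvec p.2, Stmt7Aux.kron_one_mulVec]
    rw [sub_mulVec, one_mulVec, Pi.sub_apply]
  have hφsum : ∑ jb : Fin K × Fin B, ‖φ jb‖ ^ 2 = 1 := by
    have h := hφ
    unfold enorm2 at h
    exact Real.sqrt_eq_one.1 h
  have hxsum : ∀ r, ∑ q0 : (Fin K × Fin m) × Fin B, ‖x r q0‖ ^ 2 = ∑ i, ‖c r i‖ ^ 2 := by
    intro r
    have hpt : ∀ q0 : (Fin K × Fin m) × Fin B,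
        ‖x r q0‖ ^ 2 = ‖φ (q0.1.1, q0.2)‖ ^ 2 * ‖c r q0.1.2‖ ^ 2 := by
      intro q0
      simp [hx, norm_mul, mul_pow]
    simp_rw [hpt]
    rw [Fintype.sum_prod_type]
    simp only [Fintype.sum_prod_type]
    rw [Finset.sum_comm]
    refine Finset.sum_congr rfl fun i _ => ?_
    simp_rw [← Finset.sum_mul]
    have hφ' : (∑ j : Fin K, ∑ b : Fin B, ‖φ (j, b)‖ ^ 2) = 1 := by
      rw [← hφsum, Fintype.sum_prod_type]
    rw [hφ', one_mul]
  have hcsum : ∑ r : R, ∑ i, ‖c r i‖ ^ 2 = 1 := Stmt7Aux.norm_c hN hE c hkraus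
  have hbr : ∀ r, ∑ q0 : (Fin K × Fin m) × Fin B,
      ‖((S - 1) *ᵥ fun q => x r (q, q0.2)) q0.1‖ ^ 2 ≤ δ ^ 2 * ∑ i, ‖c r i‖ ^ 2 := by
    intro r
    rw [Fintype.sum_prod_type, Finset.sum_comm]
    calc ∑ b : Fin B, ∑ q : Fin K × Fin m, ‖((S - 1) *ᵥ fun q' => x r (q', b)) q‖ ^ 2
        ≤ ∑ b : Fin B, δ ^ 2 * ∑ q : Fin K × Fin m, ‖x r (q, b)‖ ^ 2 :=
          Finset.sum_le_sum fun b _ => Stmt7Aux.spec_bound hS.1 heig (fun q' => x r (q', b))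
      _ = δ ^ 2 * ∑ q0 : (Fin K × Fin m) × Fin B, ‖x r q0‖ ^ 2 := by
          rw [← Finset.mul_sum, Fintype.sum_prod_type, Finset.sum_comm]
      _ = δ ^ 2 * ∑ i, ‖c r i‖ ^ 2 := by rw [hxsum r]
  -- conclusion
  unfold enorm2
  rw [show δ = Real.sqrt (δ ^ 2) from (Real.sqrt_sq hδ0).symm]
  apply Real.sqrt_le_sqrt
  simp_rw [hvec]
  rw [Fintype.sum_prod_type, Finset.sum_comm]
  calc ∑ r : R, ∑ q0 : (Fin K × Fin m) × Fin B,
        ‖((S - 1) *ᵥ fun q => x r (q, q0.2)) q0.1‖ ^ 2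
      ≤ ∑ r : R, δ ^ 2 * ∑ i, ‖c r i‖ ^ 2 := Finset.sum_le_sum fun r _ => hbr r
    _ = δ ^ 2 := by rw [← Finset.mul_sum, hcsum, mul_one]
end

section
/- Let {E_1, …, E_m} be a unitary error set on ℂ^N, let G be an N×K complex matrix with Km ≤ N, and suppose X = Σ_{i=1}^m E_i G ⊗ ⟨i| is a δ-approximate isometry for some 0 ≤ δ < 1. Let V = isometrize(G) = G·(G†G)^{−1/2} (well-defined since G then has rank K). Then Y = Σ_{i=1}^m E_i V ⊗ ⟨i| is a (2δ/(1−δ))-approximate isometry. -/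
open scoped Kronecker ComplexOrder
open Matrix MeasureTheory ProbabilityTheory

section Aux

open Matrix

lemma psd_sqrt_conjTranspose {n : Type*} [Fintype n] [DecidableEq n] {A : Matrix n n ℂ}
    (hA : A.PosSemidef) : (hA.sqrt)ᴴ = hA.sqrt := by
  simp only [Matrix.PosSemidef.sqrt]
  rw [conjTranspose_mul, conjTranspose_mul, diagonal_conjTranspose, ← star_eq_conjTranspose,
    ← star_eq_conjTranspose, star_star, Matrix.mul_assoc]
  congr 3
  ext i
  simp
lemma psd_sqrt_mul_self {n : Type*} [Fintype n] [DecidableEq n] {A : Matrix n n ℂ}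
    (hA : A.PosSemidef) : hA.sqrt * hA.sqrt = A := by
  have hU : (star hA.1.eigenvectorUnitary : Matrix n n ℂ) * hA.1.eigenvectorUnitary.1 = 1 :=
    Unitary.coe_star_mul_self _
  conv_rhs => rw [hA.1.spectral_theorem, Unitary.conjStarAlgAut_apply]
  simp only [Matrix.PosSemidef.sqrt, Matrix.mul_assoc]
  rw [← Matrix.mul_assoc (star _ : Matrix n n ℂ), hU, Matrix.one_mul,
    ← Matrix.mul_assoc (diagonal _) (diagonal _), diagonal_mul_diagonal]
  congr 3
  ext i
  simp only [Function.comp_apply]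
  rw [← RCLike.ofReal_mul, Real.mul_self_sqrt (hA.eigenvalues_nonneg i)]

lemma enorm2_nonneg {ι : Type*} [Fintype ι] (x : ι → ℂ) : 0 ≤ enorm2 x :=
  Real.sqrt_nonneg _

lemma enorm2_sq {ι : Type*} [Fintype ι] (x : ι → ℂ) :
    enorm2 x ^ 2 = ∑ i, ‖x i‖ ^ 2 := by
  rw [enorm2, Real.sq_sqrt]; positivity

lemma enorm2_eq_of_sq_eq {ι κ : Type*} [Fintype ι] [Fintype κ] {x : ι → ℂ} {y : κ → ℂ}
    (h : enorm2 x ^ 2 = enorm2 y ^ 2) : enorm2 x = enorm2 y := by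
  have h1 := Real.sqrt_sq (enorm2_nonneg x)
  have h2 := Real.sqrt_sq (enorm2_nonneg y)
  rw [← h1, ← h2, h]

lemma enorm2_le_of_sq_le {ι κ : Type*} [Fintype ι] [Fintype κ] {x : ι → ℂ} {y : κ → ℂ} {a : ℝ}
    (ha : 0 ≤ a) (h : enorm2 x ^ 2 ≤ a ^ 2 * enorm2 y ^ 2) : enorm2 x ≤ a * enorm2 y := by
  have h1 := Real.sqrt_sq (enorm2_nonneg x)
  have h2 : Real.sqrt (a ^ 2 * enorm2 y ^ 2) = a * enorm2 y := by
    rw [← mul_pow, Real.sqrt_sq (mul_nonneg ha (enorm2_nonneg y))]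
  rw [← h1, ← h2]
  exact Real.sqrt_le_sqrt h

lemma enorm2_sq_eq_re {ι : Type*} [Fintype ι] (x : ι → ℂ) :
    enorm2 x ^ 2 = (star x ⬝ᵥ x).re := by
  rw [enorm2_sq, dotProduct, Complex.re_sum]
  congr 1; ext i
  simp [Complex.conj_mul', Complex.normSq_eq_norm_sq, ← Complex.ofReal_pow]

lemma dot_self_mulVec {n k : ℕ} (A : Matrix (Fin n) (Fin k) ℂ) (v : Fin k → ℂ) :
    star (A *ᵥ v) ⬝ᵥ (A *ᵥ v) = star v ⬝ᵥ ((Aᴴ * A) *ᵥ v) := by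
  rw [star_mulVec, dotProduct_mulVec, vecMul_vecMul, ← dotProduct_mulVec]

lemma enorm2_mulVec_congr {n n' k : ℕ} (A : Matrix (Fin n) (Fin k) ℂ)
    (B : Matrix (Fin n') (Fin k) ℂ) (h : Aᴴ * A = Bᴴ * B) (v : Fin k → ℂ) :
    enorm2 (A *ᵥ v) = enorm2 (B *ᵥ v) := by
  apply enorm2_eq_of_sq_eq
  rw [enorm2_sq_eq_re, enorm2_sq_eq_re, dot_self_mulVec, dot_self_mulVec, h]

lemma enorm2_eq_zero {ι : Type*} [Fintype ι] {x : ι → ℂ} (h : enorm2 x ≤ 0) : x = 0 := by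
  have hs : ∑ i, ‖x i‖ ^ 2 = 0 := by
    have := enorm2_sq x
    nlinarith [enorm2_nonneg x]
  funext i
  have := (Finset.sum_eq_zero_iff_of_nonneg (fun i _ => by positivity)).mp hs i (Finset.mem_univ i)
  have : ‖x i‖ = 0 := by nlinarith [norm_nonneg (x i)]
  simpa using this

lemma enorm2_sq_prod {K m : ℕ} (c : Fin K × Fin m → ℂ) :
    enorm2 c ^ 2 = ∑ i : Fin m, enorm2 (fun k => c (k, i)) ^ 2 := by
  simp only [enorm2_sq]
  rw [Fintype.sum_prod_type]
  exact Finset.sum_comm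

lemma shiftMat_mulVec_sum {N K m : ℕ} (E : Fin m → Matrix (Fin N) (Fin N) ℂ)
    (V : Matrix (Fin N) (Fin K) ℂ) (c : Fin K × Fin m → ℂ) :
    shiftMat E V *ᵥ c = ∑ i : Fin m, (E i * V) *ᵥ (fun k => c (k, i)) := by
  funext a
  simp only [mulVec, dotProduct, shiftMat, of_apply, Finset.sum_apply]
  rw [Fintype.sum_prod_type, Finset.sum_comm]

lemma shiftMat_mulVec_mul {N K m : ℕ} (E : Fin m → Matrix (Fin N) (Fin N) ℂ)
    (G : Matrix (Fin N) (Fin K) ℂ) (M : Matrix (Fin K) (Fin K) ℂ) (c : Fin K × Fin m → ℂ) :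
    shiftMat E (G * M) *ᵥ c = shiftMat E G *ᵥ (fun p => (M *ᵥ fun k => c (k, p.2)) p.1) := by
  rw [shiftMat_mulVec_sum, shiftMat_mulVec_sum]
  apply Finset.sum_congr rfl
  intro i _
  rw [← Matrix.mul_assoc, ← Matrix.mulVec_mulVec]

lemma shiftMat_mulVec_single {N K m : ℕ} (E : Fin m → Matrix (Fin N) (Fin N) ℂ)
    (G : Matrix (Fin N) (Fin K) ℂ) (i0 : Fin m) (v : Fin K → ℂ) :
    shiftMat E G *ᵥ (fun p => if p.2 = i0 then v p.1 else 0) = (E i0 * G) *ᵥ v := by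
  funext a
  simp only [mulVec, dotProduct, shiftMat, of_apply]
  rw [Fintype.sum_prod_type]
  rw [Finset.sum_comm]
  rw [Finset.sum_eq_single i0]
  · simp
  · intro i _ hi
    simp [hi]
  · simp

lemma enorm2_single {K m : ℕ} (i0 : Fin m) (v : Fin K → ℂ) :
    enorm2 (fun p : Fin K × Fin m => if p.2 = i0 then v p.1 else 0) = enorm2 v := by
  apply enorm2_eq_of_sq_eq
  rw [enorm2_sq, enorm2_sq, Fintype.sum_prod_type, Finset.sum_comm]
  rw [Finset.sum_eq_single i0]
  · simp
  · intro i _ hi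
    simp [hi]
  · simp

end Aux


/-- if `X = Σ_i E_i G ⊗ ⟨i|` is a `δ`-approximate isometry (`0 ≤ δ < 1`) and
`V = isometrize G`, then `Y = Σ_i E_i V ⊗ ⟨i|` is a `2δ/(1-δ)`-approximate isometry. -/
theorem stmt_12 {N K m : ℕ} (hK : 0 < K) (hm : 0 < m) (hKm : K * m ≤ N)
    (E : Fin m → Matrix (Fin N) (Fin N) ℂ) (hE : IsUnitaryErrorSet E)
    (G : Matrix (Fin N) (Fin K) ℂ)
    (δ : ℝ) (hδ0 : 0 ≤ δ) (hδ1 : δ < 1)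
    (hX : IsApproxIsometry δ (shiftMat E G)) :
    IsApproxIsometry (2 * δ / (1 - δ)) (shiftMat E (isometrize G)) := by
  classical
  obtain ⟨hEu, -⟩ := hE
  have hδ' : (0:ℝ) < 1 - δ := by linarith
  set P := (Matrix.posSemidef_conjTranspose_mul_self G).sqrt with hPdef
  have hPsd := psd_sqrt_conjTranspose (Matrix.posSemidef_conjTranspose_mul_self G)
  have hPH : Pᴴ = P := hPsd
  have hPP : P * P = Gᴴ * G := psd_sqrt_mul_self _
  have i0 : Fin m := ⟨0, hm⟩
  -- G itself is a δ-approximate isometry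
  have hG : ∀ v : Fin K → ℂ,
      (1 - δ) * enorm2 v ≤ enorm2 (G *ᵥ v) ∧ enorm2 (G *ᵥ v) ≤ (1 + δ) * enorm2 v := by
    intro v
    have h1 := hX (fun p => if p.2 = i0 then v p.1 else 0)
    rw [shiftMat_mulVec_single, enorm2_single] at h1
    have h2 : enorm2 ((E i0 * G) *ᵥ v) = enorm2 (G *ᵥ v) := by
      apply enorm2_mulVec_congr
      calc (E i0 * G)ᴴ * (E i0 * G) = Gᴴ * ((E i0)ᴴ * E i0) * G := by
            rw [Matrix.conjTranspose_mul]
            simp only [Matrix.mul_assoc]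
      _ = Gᴴ * G := by rw [(hEu i0).1, Matrix.mul_one]
    rw [h2] at h1
    exact h1
  have hPG : ∀ v, enorm2 (P *ᵥ v) = enorm2 (G *ᵥ v) := fun v =>
    enorm2_mulVec_congr P G (by rw [hPH, hPP]) v
  -- P is invertible
  have hinj : Function.Injective P.mulVec := by
    intro v w h
    have h0 : P *ᵥ (v - w) = (0 : Fin K → ℂ) := by
      rw [Matrix.mulVec_sub, h, sub_self]
    have h3 := (hG (v - w)).1
    rw [← hPG, h0] at h3
    have hz : enorm2 (0 : Fin K → ℂ) = 0 := by simp [enorm2]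
    rw [hz] at h3
    have hvw : v - w = 0 := enorm2_eq_zero (by nlinarith [enorm2_nonneg (v - w)])
    exact sub_eq_zero.mp hvw
  have hdet : IsUnit P.det := by
    rw [← Matrix.isUnit_iff_isUnit_det]
    exact Matrix.mulVec_injective_iff_isUnit.mp hinj
  have hPPinv : P * P⁻¹ = 1 := Matrix.mul_nonsing_inv _ hdet
  -- bounds for P⁻¹
  have hS : ∀ w : Fin K → ℂ,
      (1 - δ) * enorm2 (P⁻¹ *ᵥ w) ≤ enorm2 w ∧ enorm2 w ≤ (1 + δ) * enorm2 (P⁻¹ *ᵥ w) := by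
    intro w
    have hw : P *ᵥ (P⁻¹ *ᵥ w) = w := by
      rw [Matrix.mulVec_mulVec, hPPinv, Matrix.one_mulVec]
    have h4 := hG (P⁻¹ *ᵥ w)
    rw [← hPG, hw] at h4
    exact h4
  -- main argument
  intro c
  set d : Fin K × Fin m → ℂ := fun p => (P⁻¹ *ᵥ fun k => c (k, p.2)) p.1 with hd
  have hYc : shiftMat E (isometrize G) *ᵥ c = shiftMat E G *ᵥ d := by
    have hiso : isometrize G = G * P⁻¹ := rfl
    rw [hiso, shiftMat_mulVec_mul]
  have hXd := hX d
  rw [← hYc] at hXd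
  obtain ⟨hy1, hy2⟩ := hXd
  -- squares comparison between d and c
  have hsq1 : (1 - δ) ^ 2 * enorm2 d ^ 2 ≤ enorm2 c ^ 2 := by
    rw [enorm2_sq_prod d, enorm2_sq_prod c, Finset.mul_sum]
    apply Finset.sum_le_sum
    intro i _
    have hdi : (fun k => d (k, i)) = P⁻¹ *ᵥ (fun k => c (k, i)) := rfl
    rw [hdi]
    have h := (hS (fun k => c (k, i))).1
    calc (1 - δ) ^ 2 * enorm2 (P⁻¹ *ᵥ fun k => c (k, i)) ^ 2
        = ((1 - δ) * enorm2 (P⁻¹ *ᵥ fun k => c (k, i))) ^ 2 := by ring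
      _ ≤ enorm2 (fun k => c (k, i)) ^ 2 :=
          pow_le_pow_left₀ (mul_nonneg hδ'.le (enorm2_nonneg _)) h 2
  have hsq2 : enorm2 c ^ 2 ≤ (1 + δ) ^ 2 * enorm2 d ^ 2 := by
    rw [enorm2_sq_prod d, enorm2_sq_prod c, Finset.mul_sum]
    apply Finset.sum_le_sum
    intro i _
    have hdi : (fun k => d (k, i)) = P⁻¹ *ᵥ (fun k => c (k, i)) := rfl
    rw [hdi]
    have h := (hS (fun k => c (k, i))).2
    calc enorm2 (fun k => c (k, i)) ^ 2
        ≤ ((1 + δ) * enorm2 (P⁻¹ *ᵥ fun k => c (k, i))) ^ 2 :=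
          pow_le_pow_left₀ (enorm2_nonneg _) h 2
      _ = (1 + δ) ^ 2 * enorm2 (P⁻¹ *ᵥ fun k => c (k, i)) ^ 2 := by ring
  have ha : 0 ≤ enorm2 c := enorm2_nonneg c
  have hb : 0 ≤ enorm2 d := enorm2_nonneg d
  have hdb1 : (1 - δ) * enorm2 d ≤ enorm2 c := by nlinarith
  have hdb2 : enorm2 c ≤ (1 + δ) * enorm2 d := by nlinarith
  have hεδ : 2 * δ / (1 - δ) * (1 - δ) = 2 * δ := div_mul_cancel₀ _ hδ'.ne'
  constructor
  · rw [← mul_le_mul_iff_of_pos_right hδ']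
    nlinarith [mul_le_mul_of_nonneg_right hy1 hδ'.le, mul_nonneg hδ0 (mul_nonneg hδ0 hb),
      mul_nonneg hδ0 ha, mul_nonneg hδ0 hb]
  · rw [← mul_le_mul_iff_of_pos_right hδ']
    nlinarith [mul_le_mul_of_nonneg_right hy2 hδ'.le, mul_nonneg hδ0 hb,
      mul_nonneg hδ0 ha]
end
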